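/- Let S₀ and S be countable sets, let x₀ ∈ S₀, and let f : S₀ × S₀ → ℝ be a unit flux from x₀: f is antisymmetric, Σ_{y∈S₀} |f(x,y)| < ∞ for every x ∈ S₀, and Σ_{y∈S₀} f(x,y) equals 1 if x = x₀ and 0 otherwise. Let φ : S₀ → S be a map all of whose fibers V_u := φ^{−1}(u) are finite, write N(u) := |V_u|, and let r : S × S → [0,∞) be symmetric. Define θ(u,v) := Σ_{x∈V_u} Σ_{y∈V_v} f(x,y) for u,v ∈ S. Then θ is a unit flux from φ(x₀) on S (antisymmetric, with absolutely convergent row sums equal to 1 at φ(x₀) and 0 elsewhere), and its energy satisfies (1/2)·Σ_{u,v∈S, u≠v} r(u,v)·θ(u,v)² ≤ (1/2)·Σ_{x,y∈S₀, x≠y} f(x,y)²·N(φ(x))·N(φ(y))·r(φ(x),φ(y)). -/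

import Mathlib

open scoped BigOperators

/-- The image flux `θ(u,v) = Σ_{x∈φ⁻¹(u)} Σ_{y∈φ⁻¹(v)} f(x,y)`. -/
noncomputable def pushFlux {S₀ S : Type*} (φ : S₀ → S) (f : S₀ → S₀ → ℝ) (u v : S) : ℝ :=
  ∑' (x : φ ⁻¹' {u}) (y : φ ⁻¹' {v}), f (x : S₀) (y : S₀)

section aux
variable {S₀ S : Type*} {φ : S₀ → S}

lemma tsum_set_finite' {β M : Type*} [AddCommMonoid M] [TopologicalSpace M] [T2Space M]
    {s : Set β} (h : s.Finite) (g : β → M) :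
    ∑' x : s, g x = ∑ x ∈ h.toFinset, g x := by
  rw [tsum_subtype,
    tsum_eq_sum (s := h.toFinset) (fun b hb => Set.indicator_of_notMem (by simpa using hb) g)]
  exact Finset.sum_congr rfl fun x hx => Set.indicator_of_mem (h.mem_toFinset.mp hx) g

lemma tsum_set_congr' {β M : Type*} [AddCommMonoid M] [TopologicalSpace M]
    {s t : Set β} (h : s = t) (g : β → M) :
    ∑' x : s, g x = ∑' x : t, g x := by subst h; rfl

lemma pushFlux_eq (f : S₀ → S₀ → ℝ) (hfib : ∀ u : S, (φ ⁻¹' {u}).Finite) (u v : S) :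
    pushFlux φ f u v = ∑ x ∈ (hfib u).toFinset, ∑ y ∈ (hfib v).toFinset, f x y :=
  (tsum_set_finite' (hfib u) _).trans
    (Finset.sum_congr rfl fun _ _ => tsum_set_finite' (hfib v) _)

end aux

/-- pushing forward a unit flux along a map with finite fibers yields a unit
flux, whose energy is bounded via Cauchy–Schwarz. -/
theorem pushFlux_unit_flux_and_energy {S₀ S : Type*} [Countable S₀] [Countable S]
    [DecidableEq S₀] [DecidableEq S]
    (x₀ : S₀) (f : S₀ → S₀ → ℝ)
    (hanti : ∀ x y : S₀, f x y = - f y x)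
    (habs : ∀ x : S₀, Summable (fun y : S₀ => |f x y|))
    (hdiv : ∀ x : S₀, ∑' y : S₀, f x y = if x = x₀ then 1 else 0)
    (φ : S₀ → S) (hfib : ∀ u : S, (φ ⁻¹' {u}).Finite)
    (r : S → S → ℝ) (hrsymm : ∀ u v : S, r u v = r v u)
    (hrnonneg : ∀ u v : S, 0 ≤ r u v) :
    (∀ u v : S, pushFlux φ f u v = - pushFlux φ f v u) ∧
    (∀ u : S, Summable (fun v : S => |pushFlux φ f u v|)) ∧
    (∀ u : S, ∑' v : S, pushFlux φ f u v = if u = φ x₀ then 1 else 0) ∧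
    (1 / 2 : ENNReal) * ∑' p : S × S,
        ENNReal.ofReal (if p.1 ≠ p.2 then r p.1 p.2 * pushFlux φ f p.1 p.2 ^ 2 else 0) ≤
      (1 / 2 : ENNReal) * ∑' p : S₀ × S₀,
        ENNReal.ofReal (if p.1 ≠ p.2 then
          f p.1 p.2 ^ 2 * (Nat.card (φ ⁻¹' {φ p.1}) : ℝ) * (Nat.card (φ ⁻¹' {φ p.2}) : ℝ) *
            r (φ p.1) (φ p.2)
        else 0) := by
  have hsig : ∀ (g : S₀ → ℝ), Summable g →
      Summable (fun p : Σ v : S, ↥(φ ⁻¹' {v}) => g (p.2 : S₀)) := fun g hg =>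
    (Equiv.sigmaFiberEquiv φ).summable_iff.mpr hg
  have hrow : ∀ (g : S₀ → ℝ), Summable g →
      Summable (fun v : S => ∑ y ∈ (hfib v).toFinset, g y) := by
    intro g hg
    have := (hsig g hg).sigma
    simpa only [tsum_set_finite' (hfib _) g] using this
  have hrowsum : ∀ (g : S₀ → ℝ), Summable g →
      ∑' v : S, ∑ y ∈ (hfib v).toFinset, g y = ∑' y, g y := by
    intro g hg
    have h1 : ∑' p : (Σ v : S, ↥(φ ⁻¹' {v})), g (p.2 : S₀) = ∑' y, g y :=
      (Equiv.sigmaFiberEquiv φ).tsum_eq g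
    rw [← h1, Summable.tsum_sigma (hsig g hg)]
    exact tsum_congr fun v => (tsum_set_finite' (hfib v) g).symm
  refine ⟨?_, ?_, ?_, ?_⟩
  · -- antisymmetry
    intro u v
    rw [pushFlux_eq f hfib, pushFlux_eq f hfib, Finset.sum_comm, ← Finset.sum_neg_distrib]
    refine Finset.sum_congr rfl fun y _ => ?_
    rw [← Finset.sum_neg_distrib]
    exact Finset.sum_congr rfl fun x _ => hanti x y
  · intro u
    have hb : Summable (fun v : S =>
        ∑ x ∈ (hfib u).toFinset, ∑ y ∈ (hfib v).toFinset, |f x y|) :=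
      summable_sum fun x _ => hrow _ (habs x)
    refine hb.of_nonneg_of_le (fun v => abs_nonneg _) (fun v => ?_)
    rw [pushFlux_eq f hfib]
    calc |∑ x ∈ (hfib u).toFinset, ∑ y ∈ (hfib v).toFinset, f x y|
        ≤ ∑ x ∈ (hfib u).toFinset, |∑ y ∈ (hfib v).toFinset, f x y| :=
          Finset.abs_sum_le_sum_abs _ _
      _ ≤ ∑ x ∈ (hfib u).toFinset, ∑ y ∈ (hfib v).toFinset, |f x y| :=
          Finset.sum_le_sum fun x _ => Finset.abs_sum_le_sum_abs _ _
  · intro u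
    rw [tsum_congr (pushFlux_eq f hfib u),
      Summable.tsum_finsetSum (fun x _ => hrow _ (habs x).of_abs)]
    have : ∀ x ∈ (hfib u).toFinset,
        ∑' v : S, ∑ y ∈ (hfib v).toFinset, f x y = if x = x₀ then 1 else 0 := fun x _ =>
      (hrowsum _ (habs x).of_abs).trans (hdiv x)
    rw [Finset.sum_congr rfl this, Finset.sum_ite_eq' (hfib u).toFinset x₀ (fun _ => (1:ℝ))]
    by_cases h : u = φ x₀ <;> simp [h, (hfib u).mem_toFinset, eq_comm]
  · -- energy bound
    set F : S₀ × S₀ → ENNReal := fun p =>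
      ENNReal.ofReal (if p.1 ≠ p.2 then
        f p.1 p.2 ^ 2 * (Nat.card (φ ⁻¹' {φ p.1}) : ℝ) * (Nat.card (φ ⁻¹' {φ p.2}) : ℝ) *
          r (φ p.1) (φ p.2) else 0) with hF
    set ψ : S₀ × S₀ → S × S := fun p => (φ p.1, φ p.2) with hψ
    have key : ∑' p : S₀ × S₀, F p = ∑' uv : S × S, ∑' q : {p : S₀ × S₀ // ψ p = uv}, F q := by
      rw [← (Equiv.sigmaFiberEquiv ψ).tsum_eq F, ENNReal.tsum_sigma']
      exact tsum_congr fun a => tsum_congr fun b => rfl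
    have hN : ∀ w : S, (Nat.card (φ ⁻¹' {w}) : ℕ) = (hfib w).toFinset.card := by
      intro w
      rw [Nat.card_coe_set_eq, Set.ncard_eq_toFinset_card _ (hfib w)]
    have bound : ∀ uv : S × S,
        ENNReal.ofReal (if uv.1 ≠ uv.2 then r uv.1 uv.2 * pushFlux φ f uv.1 uv.2 ^ 2 else 0)
          ≤ ∑' q : {p : S₀ × S₀ // ψ p = uv}, F q := by
      rintro ⟨u, v⟩
      by_cases h : u = v
      · simp [h]
      · have hset : ψ ⁻¹' {(u, v)} = (φ ⁻¹' {u}) ×ˢ (φ ⁻¹' {v}) := by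
          ext p; simp [hψ, Prod.ext_iff]
        have hfin : ((φ ⁻¹' {u}) ×ˢ (φ ⁻¹' {v}) : Set (S₀ × S₀)).Finite :=
          (hfib u).prod (hfib v)
        have hsum : ∑' q : {p : S₀ × S₀ // ψ p = (u, v)}, F q
            = ∑ x ∈ (hfib u).toFinset, ∑ y ∈ (hfib v).toFinset, F (x, y) := by
          calc ∑' q : {p : S₀ × S₀ // ψ p = (u, v)}, F q
              = ∑' q : (ψ ⁻¹' {(u, v)}), F q := rfl
            _ = ∑' q : ((φ ⁻¹' {u}) ×ˢ (φ ⁻¹' {v}) : Set (S₀ × S₀)), F q :=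
                tsum_set_congr' hset F
            _ = ∑ p ∈ hfin.toFinset, F p := tsum_set_finite' hfin F
            _ = ∑ p ∈ (hfib u).toFinset ×ˢ (hfib v).toFinset, F p := by
                rw [Set.Finite.toFinset_prod]
            _ = _ := Finset.sum_product _ _ _
        show ENNReal.ofReal (if u ≠ v then r u v * pushFlux φ f u v ^ 2 else 0)
          ≤ ∑' q : {p : S₀ × S₀ // ψ p = (u, v)}, F ↑q
        rw [hsum, if_pos h]
        -- pointwise value of F on the product
        have hFval : ∀ x ∈ (hfib u).toFinset, ∀ y ∈ (hfib v).toFinset,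
            F (x, y) = ENNReal.ofReal
              (f x y ^ 2 * ((hfib u).toFinset.card : ℝ) * ((hfib v).toFinset.card : ℝ) * r u v) := by
          intro x hx y hy
          have hxu : φ x = u := (hfib u).mem_toFinset.mp hx
          have hyv : φ y = v := (hfib v).mem_toFinset.mp hy
          have hxy : x ≠ y := fun e => h (by rw [← hxu, ← hyv, e])
          simp [hF, hxy, hxu, hyv, hN]
        rw [Finset.sum_congr rfl (fun x hx => Finset.sum_congr rfl (hFval x hx))]
        -- now a real inequality
        set Tu := (hfib u).toFinset
        set Tv := (hfib v).toFinset
        have hnn : ∀ x y : S₀,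
            0 ≤ f x y ^ 2 * (Tu.card : ℝ) * (Tv.card : ℝ) * r u v := by
          intro x y
          have h0 := hrnonneg u v
          exact mul_nonneg (mul_nonneg (mul_nonneg (sq_nonneg _) (Nat.cast_nonneg _)) (Nat.cast_nonneg _)) h0
        have hofr : ∑ x ∈ Tu, ∑ y ∈ Tv,
              ENNReal.ofReal (f x y ^ 2 * (Tu.card : ℝ) * (Tv.card : ℝ) * r u v)
            = ENNReal.ofReal (∑ x ∈ Tu, ∑ y ∈ Tv,
                f x y ^ 2 * (Tu.card : ℝ) * (Tv.card : ℝ) * r u v) := by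
          calc ∑ x ∈ Tu, ∑ y ∈ Tv,
                ENNReal.ofReal (f x y ^ 2 * (Tu.card : ℝ) * (Tv.card : ℝ) * r u v)
              = ∑ x ∈ Tu, ENNReal.ofReal (∑ y ∈ Tv,
                  f x y ^ 2 * (Tu.card : ℝ) * (Tv.card : ℝ) * r u v) :=
                Finset.sum_congr rfl fun x _ =>
                  (ENNReal.ofReal_sum_of_nonneg fun y _ => hnn x y).symm
            _ = _ := (ENNReal.ofReal_sum_of_nonneg fun x _ =>
                  Finset.sum_nonneg fun y _ => hnn x y).symm
        rw [hofr]
        refine ENNReal.ofReal_le_ofReal ?_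
        have hcs : (∑ p ∈ Tu ×ˢ Tv, f p.1 p.2) ^ 2
            ≤ ((Tu.card * Tv.card : ℕ) : ℝ) * ∑ p ∈ Tu ×ˢ Tv, f p.1 p.2 ^ 2 := by
          simpa [Finset.card_product] using
            sq_sum_le_card_mul_sum_sq (s := Tu ×ˢ Tv) (f := fun p => f p.1 p.2)
        have e1 : ∑ x ∈ Tu, ∑ y ∈ Tv, f x y = ∑ p ∈ Tu ×ˢ Tv, f p.1 p.2 := by
          rw [Finset.sum_product]
        have e3 : ∑ x ∈ Tu, ∑ y ∈ Tv, f x y ^ 2 = ∑ p ∈ Tu ×ˢ Tv, f p.1 p.2 ^ 2 := by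
          rw [Finset.sum_product]
        have e2 : ∑ x ∈ Tu, ∑ y ∈ Tv, f x y ^ 2 * (Tu.card : ℝ) * (Tv.card : ℝ) * r u v
            = (∑ x ∈ Tu, ∑ y ∈ Tv, f x y ^ 2)
                * ((Tu.card : ℝ) * (Tv.card : ℝ) * r u v) := by
          rw [Finset.sum_mul]
          refine Finset.sum_congr rfl fun x _ => ?_
          rw [Finset.sum_mul]
          exact Finset.sum_congr rfl fun y _ => by ring
        rw [pushFlux_eq f hfib, e1, e2, e3]
        calc r u v * (∑ p ∈ Tu ×ˢ Tv, f p.1 p.2) ^ 2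
            ≤ r u v * (((Tu.card * Tv.card : ℕ) : ℝ) * ∑ p ∈ Tu ×ˢ Tv, f p.1 p.2 ^ 2) :=
              mul_le_mul_of_nonneg_left hcs (hrnonneg u v)
          _ = (∑ p ∈ Tu ×ˢ Tv, f p.1 p.2 ^ 2) * ((Tu.card : ℝ) * (Tv.card : ℝ) * r u v) := by
              push_cast; ring
    calc (1 / 2 : ENNReal) * ∑' p : S × S,
          ENNReal.ofReal (if p.1 ≠ p.2 then r p.1 p.2 * pushFlux φ f p.1 p.2 ^ 2 else 0)
        ≤ (1 / 2 : ENNReal) * ∑' uv : S × S, ∑' q : {p : S₀ × S₀ // ψ p = uv}, F q :=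
          mul_le_mul_right (ENNReal.tsum_le_tsum bound) _
      _ = (1 / 2 : ENNReal) * ∑' p : S₀ × S₀, F p := by rw [← key]
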